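/- In the four-dimensional HP algebra spanned by {d_t, e₋, e⁺, e} with multiplication e₋e⁺ = d_t, e₋e = e₋, ee⁺ = e⁺, e² = e and all other products zero, every two-dimensional *-subalgebra containing d_t is commutative. -/

import Mathlib

open Matrix

/-- In the four-dimensional HP algebra, realized as the span of the matrix
units `{D_t, e₋, e⁺, e} = {E₁₃, E₁₂, E₂₃, E₂₂}` in `M₃(ℂ)` with involution
`X ↦ G Xᴴ G`, every two-dimensional *-subalgebra containing `d_t` is
commutative. -/
theorem two_dim_star_subalgebra_of_hp_is_commutative
    (Dt Em Ep E G : Matrix (Fin 3) (Fin 3) ℂ)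
    (hDt : Dt = Matrix.single 0 2 1) (hEm : Em = Matrix.single 0 1 1)
    (hEp : Ep = Matrix.single 1 2 1) (hE : E = Matrix.single 1 1 1)
    (hG : G = Matrix.single 0 2 1 + Matrix.single 1 1 1 + Matrix.single 2 0 1)
    (A : Submodule ℂ (Matrix (Fin 3) (Fin 3) ℂ))
    (hA : A = Submodule.span ℂ {Dt, Em, Ep, E})
    (S : Submodule ℂ (Matrix (Fin 3) (Fin 3) ℂ))
    (hSA : S ≤ A)
    (hmul : ∀ X ∈ S, ∀ Y ∈ S, X * Y ∈ S)
    (hstar : ∀ X ∈ S, G * Xᴴ * G ∈ S)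
    (hdt : Dt ∈ S)
    (hdim : Module.finrank ℂ S = 2) :
    ∀ X ∈ S, ∀ Y ∈ S, X * Y = Y * X := by
  -- `Dt` annihilates every element of `A` on both sides.
  have hL : ∀ Z ∈ A, Dt * Z = 0 := by
    intro Z hZ
    rw [hA] at hZ
    induction hZ using Submodule.span_induction with
    | mem x hx =>
      rcases hx with rfl | rfl | rfl | rfl <;>
        · subst hDt
          first
          | (subst hEm; exact Matrix.single_mul_single_of_ne _ _ _ _ (by decide) _)
          | (subst hEp; exact Matrix.single_mul_single_of_ne _ _ _ _ (by decide) _)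
          | (subst hE; exact Matrix.single_mul_single_of_ne _ _ _ _ (by decide) _)
          | exact Matrix.single_mul_single_of_ne _ _ _ _ (by decide) _
    | zero => simp
    | add x y _ _ hx hy => rw [mul_add, hx, hy, add_zero]
    | smul a x _ hx => rw [mul_smul_comm, hx, smul_zero]
  have hR : ∀ Z ∈ A, Z * Dt = 0 := by
    intro Z hZ
    rw [hA] at hZ
    induction hZ using Submodule.span_induction with
    | mem x hx =>
      rcases hx with rfl | rfl | rfl | rfl <;>
        · subst hDt
          first
          | (subst hEm; exact Matrix.single_mul_single_of_ne _ _ _ _ (by decide) _)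
          | (subst hEp; exact Matrix.single_mul_single_of_ne _ _ _ _ (by decide) _)
          | (subst hE; exact Matrix.single_mul_single_of_ne _ _ _ _ (by decide) _)
          | exact Matrix.single_mul_single_of_ne _ _ _ _ (by decide) _
    | zero => simp
    | add x y _ _ hx hy => rw [add_mul, hx, hy, add_zero]
    | smul a x _ hx => rw [smul_mul_assoc, hx, smul_zero]
  intro X hX Y hY
  -- `Dt, X, Y` are linearly dependent inside `S` (which has dimension 2).
  have hnli : ¬ LinearIndependent ℂ
      (![⟨Dt, hdt⟩, ⟨X, hX⟩, ⟨Y, hY⟩] : Fin 3 → S) := by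
    intro h
    have := h.fintype_card_le_finrank
    rw [hdim] at this
    simp at this
  obtain ⟨g, hg, i, hgi⟩ := Fintype.not_linearIndependent_iff.mp hnli
  have hrel : g 0 • Dt + g 1 • X + g 2 • Y = 0 := by
    have := congrArg (Subtype.val) hg
    simpa [Fin.sum_univ_three] using this
  have hXDt : X * Dt = 0 := hR X (hSA hX)
  have hDtX : Dt * X = 0 := hL X (hSA hX)
  have hYDt : Y * Dt = 0 := hR Y (hSA hY)
  have hDtY : Dt * Y = 0 := hL Y (hSA hY)
  -- multiply the relation by X on the left and on the right
  have h1 : g 1 • (X * X) + g 2 • (X * Y) = 0 := by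
    have := congrArg (fun Z => X * Z) hrel
    simpa [mul_add, mul_smul_comm, hXDt] using this
  have h2 : g 1 • (X * X) + g 2 • (Y * X) = 0 := by
    have := congrArg (fun Z => Z * X) hrel
    simpa [add_mul, smul_mul_assoc, hDtX] using this
  rcases eq_or_ne (g 2) 0 with h2z | h2z
  · rcases eq_or_ne (g 1) 0 with h1z | h1z
    · -- then g 0 ≠ 0 and Dt = 0, contradiction
      exfalso
      have hg0 : g 0 ≠ 0 := by
        fin_cases i <;> simp_all
      have hDt0 : Dt = 0 := by
        have := hrel
        rw [h1z, h2z] at this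
        simp only [zero_smul, add_zero] at this
        exact (smul_eq_zero.mp this).resolve_left hg0
      have := congrFun (congrFun hDt0 0) 2
      rw [hDt] at this
      simp [Matrix.single] at this
    · -- g 2 = 0, g 1 ≠ 0 : g 0 • Dt + g 1 • X = 0, so X ∝ Dt
      have hrel' : g 0 • Dt + g 1 • X = 0 := by
        have := hrel; rw [h2z] at this; simpa using this
      have hXY : X * Y = 0 := by
        have := congrArg (fun Z => Z * Y) hrel'
        simp only [add_mul, smul_mul_assoc, hDtY, smul_zero, zero_add, zero_mul] at this
        exact (smul_eq_zero.mp this).resolve_left h1z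
      have hYX : Y * X = 0 := by
        have := congrArg (fun Z => Y * Z) hrel'
        simp only [mul_add, mul_smul_comm, hYDt, smul_zero, zero_add, mul_zero] at this
        exact (smul_eq_zero.mp this).resolve_left h1z
      rw [hXY, hYX]
  · -- g 2 ≠ 0
    have h3 : g 2 • (X * Y) = g 2 • (Y * X) := add_left_cancel (h1.trans h2.symm)
    exact smul_right_injective _ h2z h3
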